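/- arXiv:1511.01439 — 5 statements merged into one kernel-verified Lean document; each statement's English description precedes it below -/
import Mathlib

section
/- Let A be a real, symmetric, nonsingular d×d matrix and let Ψ : ℝ^d → ℝ be a smooth function with M_{d+2}(Ψ) := Σ_{2 ≤ |α| ≤ d+2} sup_{ξ∈ℝ^d} |∂^α Ψ(ξ)| < ∞. Set Φ_ε(ξ) = (1/2)⟨Aξ, ξ⟩ + ε Ψ(ξ). Then there exists ε₀ > 0 (depending on A, d, and M_{d+2}(Ψ)) such that for all 0 < ε ≤ ε₀: (a) |det Hess Φ_ε(ξ)| ≥ |det A|/2 > 0 for all ξ ∈ ℝ^d, and (b) the map ξ ↦ ∇Φ_ε(ξ) is injective on ℝ^d. -/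
open scoped RealInnerProductSpace

noncomputable def hessM (d : ℕ) (Φ : EuclideanSpace ℝ (Fin d) → ℝ)
    (ξ : EuclideanSpace ℝ (Fin d)) : Matrix (Fin d) (Fin d) ℝ :=
  fun i j => iteratedFDeriv ℝ 2 Φ ξ ![EuclideanSpace.single i 1, EuclideanSpace.single j 1]

lemma aux_norm_fderiv_one {E F : Type*} [NormedAddCommGroup E] [NormedSpace ℝ E]
    [NormedAddCommGroup F] [NormedSpace ℝ F] (f : E → F) (x : E) :
    ‖fderiv ℝ f x‖ = ‖iteratedFDeriv ℝ 1 f x‖ := by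
  rw [show iteratedFDeriv ℝ 1 f x = (continuousMultilinearCurryFin1 ℝ E F).symm (fderiv ℝ f x) by
    ext m; simp [iteratedFDeriv_one_apply]]
  exact (LinearIsometryEquiv.norm_map _ _).symm

set_option maxHeartbeats 1000000 in
theorem stmt9 (d : ℕ) (A : Matrix (Fin d) (Fin d) ℝ) (hA : A.IsSymm)
    (hAdet : A.det ≠ 0)
    (Ψ : EuclideanSpace ℝ (Fin d) → ℝ) (hΨ : ContDiff ℝ (⊤ : ℕ∞) Ψ)
    (M : ℝ) (hM : ∀ n ∈ Finset.Icc 2 (d + 2), ∀ ξ, ‖iteratedFDeriv ℝ n Ψ ξ‖ ≤ M) :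
    ∃ ε₀ : ℝ, 0 < ε₀ ∧ ∀ ε : ℝ, 0 < ε → ε ≤ ε₀ →
      0 < |A.det| / 2 ∧
      (∀ ξ, |A.det| / 2 ≤
        |(hessM d (fun η => (1 / 2 : ℝ) * ⟪Matrix.toEuclideanLin A η, η⟫ + ε * Ψ η) ξ).det|) ∧
      Function.Injective
        (gradient (fun η => (1 / 2 : ℝ) * ⟪Matrix.toEuclideanLin A η, η⟫ + ε * Ψ η)) := by
  classical
  have hnat : ∀ n : ℕ, (n : WithTop ℕ∞) ≤ ((⊤:ℕ∞) : WithTop ℕ∞) := fun n => by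
    exact_mod_cast le_top
  have hM0 : 0 ≤ M := le_trans (norm_nonneg _) (hM 2 (by simp) 0)
  set T : EuclideanSpace ℝ (Fin d) →L[ℝ] EuclideanSpace ℝ (Fin d) :=
    Matrix.toEuclideanCLM (𝕜 := ℝ) A with hT
  have hTlin : ∀ v, T v = Matrix.toEuclideanLin A v := fun v => by
    rw [hT, ← Matrix.coe_toEuclideanCLM_eq_toEuclideanLin]; rfl
  have hherm : A.IsHermitian := by
    rw [Matrix.IsHermitian, Matrix.conjTranspose]; ext i j; simpa using congrFun (congrFun hA i) j
  have hsym : ∀ v w, ⟪T v, w⟫ = ⟪v, T w⟫ := by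
    intro v w
    have := (Matrix.isHermitian_iff_isSymmetric.mp hherm) v w
    simpa [hTlin] using this
  set L : EuclideanSpace ℝ (Fin d) →L[ℝ] (EuclideanSpace ℝ (Fin d) →L[ℝ] ℝ) :=
    (innerSL ℝ).comp T with hL
  set q : EuclideanSpace ℝ (Fin d) → ℝ :=
    fun η => (1/2 : ℝ) * ⟪Matrix.toEuclideanLin A η, η⟫ with hqdef
  have hqe : q = fun η => (1/2 : ℝ) * ⟪T η, η⟫ := by
    funext η; rw [hqdef]; rw [hTlin]
  have hq' : ∀ ξ, HasFDerivAt q (L ξ) ξ := by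
    intro ξ
    have h1 : HasFDerivAt (fun η : EuclideanSpace ℝ (Fin d) => ⟪T η, η⟫)
        ((fderivInnerCLM ℝ (T ξ, ξ)).comp (T.prod (ContinuousLinearMap.id ℝ _))) ξ :=
      (T.hasFDerivAt).inner ℝ (hasFDerivAt_id ξ)
    have h2 := h1.const_mul (1/2 : ℝ)
    rw [hqe]
    refine HasFDerivAt.congr_fderiv h2 ?_
    ext v
    have h3 : ⟪T v, ξ⟫ = ⟪T ξ, v⟫ := by rw [hsym v ξ, real_inner_comm]
    simp only [ContinuousLinearMap.coe_smul', Pi.smul_apply, ContinuousLinearMap.coe_comp',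
      Function.comp_apply, ContinuousLinearMap.prod_apply, ContinuousLinearMap.coe_id', id_eq,
      fderivInnerCLM_apply, hL, innerSL_apply_apply, smul_eq_mul]
    rw [h3]; ring
  have hqc : ContDiff ℝ (⊤ : ℕ∞) q := by
    rw [hqe]
    exact contDiff_const.mul ((T.contDiff).inner ℝ contDiff_id)
  have hfq : fderiv ℝ q = ⇑L := funext fun ξ => (hq' ξ).fderiv
  -- gradient formula
  have hΨd : Differentiable ℝ Ψ := hΨ.differentiable (by simp)
  have hgrad : ∀ (ε : ℝ) (ξ : EuclideanSpace ℝ (Fin d)),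
      gradient (fun η => q η + ε * Ψ η) ξ = T ξ + ε • gradient Ψ ξ := by
    intro ε ξ
    have hGA : HasGradientAt (fun η => q η + ε * Ψ η) (T ξ + ε • gradient Ψ ξ) ξ := by
      rw [hasGradientAt_iff_hasFDerivAt]
      have h1 : HasFDerivAt (fun η => q η + ε * Ψ η) (L ξ + ε • fderiv ℝ Ψ ξ) ξ :=
        (hq' ξ).add ((hΨd ξ).hasFDerivAt.const_mul ε)
      have heq : (InnerProductSpace.toDual ℝ _) (T ξ + ε • gradient Ψ ξ)
          = L ξ + ε • fderiv ℝ Ψ ξ := by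
        have hgΨ : (InnerProductSpace.toDual ℝ _) (gradient Ψ ξ) = fderiv ℝ Ψ ξ :=
          LinearIsometryEquiv.apply_symm_apply _ _
        rw [map_add, map_smul, hgΨ]
        congr 1
      rw [heq]; exact h1
    exact hGA.gradient
  -- hessian formula
  have hhess : ∀ (ε : ℝ) (ξ : EuclideanSpace ℝ (Fin d)) (i j : Fin d),
      hessM d (fun η => q η + ε * Ψ η) ξ i j
        = A i j + ε * iteratedFDeriv ℝ 2 Ψ ξ
            ![EuclideanSpace.single i 1, EuclideanSpace.single j 1] := by
    intro ε ξ i j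
    have hq2 : ContDiff ℝ (2 : ℕ) q := hqc.of_le (hnat 2)
    have hΨ2 : ContDiff ℝ (2 : ℕ) (fun η => ε * Ψ η) :=
      contDiff_const.mul (hΨ.of_le (hnat 2))
    have hqpart : iteratedFDeriv ℝ 2 q ξ
        ![EuclideanSpace.single i 1, EuclideanSpace.single j 1] = A i j := by
      rw [iteratedFDeriv_two_apply, hfq, L.fderiv]
      show L (EuclideanSpace.single i 1) (EuclideanSpace.single j 1) = A i j
      rw [hL]
      simp only [ContinuousLinearMap.coe_comp', Function.comp_apply, innerSL_apply_apply]
      rw [hTlin, EuclideanSpace.inner_single_right]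
      have hcol : (Matrix.toEuclideanLin A (EuclideanSpace.single i 1)) j = A j i := by
        simp [Matrix.toEuclideanLin_apply]
      rw [hcol, hA.apply i j]
      simp
    have hΨpart : iteratedFDeriv ℝ 2 (fun η => ε * Ψ η) ξ
        ![EuclideanSpace.single i 1, EuclideanSpace.single j 1]
        = ε * iteratedFDeriv ℝ 2 Ψ ξ
            ![EuclideanSpace.single i 1, EuclideanSpace.single j 1] := by
      have heps : (fun η => ε * Ψ η) = ε • Ψ := by funext η; simp
      rw [heps, iteratedFDeriv_const_smul_apply (hΨ.of_le (hnat 2)).contDiffAt]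
      simp
    show iteratedFDeriv ℝ 2 (fun η => q η + ε * Ψ η) ξ _ = _
    rw [iteratedFDeriv_add_apply' hq2.contDiffAt hΨ2.contDiffAt, ContinuousMultilinearMap.add_apply, hqpart, hΨpart]
  -- bound on Ψ hessian entries
  have hΨbnd : ∀ (ξ : EuclideanSpace ℝ (Fin d)) (i j : Fin d),
      |iteratedFDeriv ℝ 2 Ψ ξ ![EuclideanSpace.single i 1, EuclideanSpace.single j 1]| ≤ M := by
    intro ξ i j
    have h1 := ContinuousMultilinearMap.le_opNorm (iteratedFDeriv ℝ 2 Ψ ξ)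
      ![EuclideanSpace.single i 1, EuclideanSpace.single j 1]
    have h2 : (∏ k : Fin 2, ‖![EuclideanSpace.single i (1:ℝ), EuclideanSpace.single j 1] k‖)
        = 1 := by
      rw [Fin.prod_univ_two]
      simp [EuclideanSpace.norm_single]
    rw [h2, mul_one] at h1
    exact le_trans h1 (hM 2 (by simp) ξ)
  -- continuity of det
  have hdetpos : 0 < |A.det| / 2 := by positivity
  have hFc : ContinuousAt (fun B : (Fin d → Fin d → ℝ) => (Matrix.of B).det)
      (fun i j => A i j) := (continuous_id.matrix_det).continuousAt
  obtain ⟨δ, hδ, hdet⟩ := Metric.continuousAt_iff.mp hFc (|A.det| / 2) hdetpos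
  -- inverse CLM
  set CB : EuclideanSpace ℝ (Fin d) →L[ℝ] EuclideanSpace ℝ (Fin d) :=
    Matrix.toEuclideanCLM (𝕜 := ℝ) A⁻¹ with hCB
  have hCBT : ∀ v, CB (T v) = v := by
    intro v
    have h1 : CB * T = 1 := by
      rw [hCB, hT, ← map_mul, Matrix.nonsing_inv_mul A (isUnit_iff_ne_zero.mpr hAdet), map_one]
    calc CB (T v) = (CB * T) v := rfl
      _ = v := by rw [h1]; rfl
  -- Lipschitz bound on gradient of Ψ
  have hlip : ∀ x y, ‖gradient Ψ x - gradient Ψ y‖ ≤ M * ‖x - y‖ := by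
    intro x y
    have heq : ‖gradient Ψ x - gradient Ψ y‖ = ‖fderiv ℝ Ψ x - fderiv ℝ Ψ y‖ := by
      rw [show gradient Ψ x - gradient Ψ y
          = (InnerProductSpace.toDual ℝ _).symm (fderiv ℝ Ψ x - fderiv ℝ Ψ y) by
        rw [map_sub]; rfl]
      exact LinearIsometryEquiv.norm_map _ _
    rw [heq]
    have hdiff : ∀ z ∈ (Set.univ : Set (EuclideanSpace ℝ (Fin d))),
        DifferentiableAt ℝ (fderiv ℝ Ψ) z := fun z _ =>
      ((hΨ.fderiv_right (m := 1) (by rw [show ((1:WithTop ℕ∞)+1) = ((2:ℕ):WithTop ℕ∞) by norm_cast]; exact hnat 2)).differentiable (by norm_num)) z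
    have hbnd : ∀ z ∈ (Set.univ : Set (EuclideanSpace ℝ (Fin d))),
        ‖fderiv ℝ (fderiv ℝ Ψ) z‖ ≤ M := by
      intro z _
      rw [aux_norm_fderiv_one, norm_iteratedFDeriv_fderiv]
      exact hM 2 (by simp) z
    exact Convex.norm_image_sub_le_of_norm_fderiv_le hdiff hbnd convex_univ
      (Set.mem_univ y) (Set.mem_univ x)
  -- choose ε₀
  refine ⟨min (δ / (2 * (M + 1))) (1 / (2 * (‖CB‖ * M + 1))), by positivity, ?_⟩
  intro ε hε hεle
  have hε1 : ε ≤ δ / (2 * (M + 1)) := le_trans hεle (min_le_left _ _)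
  have hε2 : ε ≤ 1 / (2 * (‖CB‖ * M + 1)) := le_trans hεle (min_le_right _ _)
  refine ⟨hdetpos, ?_, ?_⟩
  · -- determinant bound
    intro ξ
    have hdist : dist (fun i j => hessM d (fun η => q η + ε * Ψ η) ξ i j)
        (fun i j => A i j) < δ := by
      rw [dist_pi_lt_iff hδ]
      intro i
      rw [dist_pi_lt_iff hδ]
      intro j
      rw [Real.dist_eq]
      have hsub : hessM d (fun η => q η + ε * Ψ η) ξ i j - A i j
          = ε * iteratedFDeriv ℝ 2 Ψ ξ
              ![EuclideanSpace.single i 1, EuclideanSpace.single j 1] := by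
        rw [hhess]; ring
      rw [hsub, abs_mul, abs_of_pos hε]
      calc ε * |iteratedFDeriv ℝ 2 Ψ ξ _| ≤ ε * M :=
            mul_le_mul_of_nonneg_left (hΨbnd ξ i j) (le_of_lt hε)
        _ ≤ (δ / (2 * (M + 1))) * M := mul_le_mul_of_nonneg_right hε1 hM0
        _ < δ := by
            rw [div_mul_eq_mul_div, div_lt_iff₀ (by positivity)]
            nlinarith
    have hlt := hdet hdist
    rw [Real.dist_eq] at hlt
    have hofA : (Matrix.of (fun i j => A i j)).det = A.det := rfl
    have hofB : (Matrix.of (fun i j => hessM d (fun η => q η + ε * Ψ η) ξ i j)).det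
        = (hessM d (fun η => q η + ε * Ψ η) ξ).det := rfl
    rw [hofB, hofA] at hlt
    have habs := abs_sub_abs_le_abs_sub A.det ((hessM d (fun η => q η + ε * Ψ η) ξ).det)
    rw [abs_sub_comm] at hlt
    show |A.det| / 2 ≤ |(hessM d (fun η => q η + ε * Ψ η) ξ).det|
    linarith
  · -- injectivity
    intro x y hxy
    have hxy' : T x + ε • gradient Ψ x = T y + ε • gradient Ψ y := by
      rw [← hgrad ε x, ← hgrad ε y]; exact hxy
    have hTxy : T (x - y) = ε • gradient Ψ y - ε • gradient Ψ x := by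
      rw [map_sub, sub_eq_sub_iff_add_eq_add]
      exact hxy'.trans (add_comm _ _)
    have hnorm : ‖x - y‖ ≤ ‖CB‖ * (ε * (M * ‖x - y‖)) := by
      calc ‖x - y‖ = ‖CB (T (x - y))‖ := by rw [hCBT]
        _ ≤ ‖CB‖ * ‖T (x - y)‖ := CB.le_opNorm _
        _ = ‖CB‖ * (ε * ‖gradient Ψ y - gradient Ψ x‖) := by
            rw [hTxy, ← smul_sub, norm_smul, Real.norm_eq_abs, abs_of_pos hε]
        _ ≤ ‖CB‖ * (ε * (M * ‖x - y‖)) := by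
            have hl := hlip y x
            rw [show ‖y - x‖ = ‖x - y‖ from norm_sub_rev y x] at hl
            gcongr
    have hfac : ‖CB‖ * (ε * (M * ‖x - y‖)) ≤ (1/2 : ℝ) * ‖x - y‖ := by
      have h1 : ε * (‖CB‖ * M) ≤ 1/2 := by
        calc ε * (‖CB‖ * M) ≤ (1 / (2 * (‖CB‖ * M + 1))) * (‖CB‖ * M) :=
              mul_le_mul_of_nonneg_right hε2 (by positivity)
          _ ≤ 1/2 := by
              rw [div_mul_eq_mul_div, one_mul, div_le_div_iff₀ (by positivity) (by norm_num)]
              nlinarith [norm_nonneg CB]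
      have hring : ‖CB‖ * (ε * (M * ‖x - y‖)) = (ε * (‖CB‖ * M)) * ‖x - y‖ := by ring
      rw [hring]
      exact mul_le_mul_of_nonneg_right h1 (norm_nonneg _)
    have hhalf : ‖x - y‖ ≤ (1/2 : ℝ) * ‖x - y‖ := le_trans hnorm hfac
    have hz : ‖x - y‖ ≤ 0 := by linarith
    have h0 := le_antisymm hz (norm_nonneg _)
    rwa [norm_eq_zero, sub_eq_zero] at h0
end

section
/- Let Φ : ℝ^d → ℝ be smooth and let V be an open set on which M_k := Σ_{2 ≤ |α| ≤ k} sup_{ξ∈V} |∂^α Φ(ξ)| < ∞ for all relevant k (with the convention M_1 = 1). For i ∈ {1,…,d} define A_i(ξ) = ∂_i Φ(ξ) / |∇Φ(ξ)|² on the set where ∇Φ(ξ) ≠ 0. Then for every multi-index α with |α| ≥ 1 there exists a nondecreasing function F : [0,∞) → [0,∞) (depending only on d and |α|) such that for all ξ ∈ V with ∇Φ(ξ) ≠ 0: |∂^α A_i(ξ)| ≤ F(M_{1+|α|}) Σ_{k=2}^{1+|α|} |∇Φ(ξ)|^{-k}. -/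
open Set Finset

noncomputable section

variable {d : ℕ}

local notation "𝔼" => EuclideanSpace ℝ (Fin d)

lemma grad_eq (Φ : 𝔼 → ℝ) : gradient Φ = fun ξ =>
    (InnerProductSpace.toDual ℝ (EuclideanSpace ℝ (Fin d))).symm (fderiv ℝ Φ ξ) := rfl

lemma norm_grad (Φ : 𝔼 → ℝ) (ξ : 𝔼) : ‖gradient Φ ξ‖ = ‖fderiv ℝ Φ ξ‖ := by
  rw [grad_eq]; exact LinearIsometryEquiv.norm_map _ _

lemma norm_itd_grad (Φ : 𝔼 → ℝ) (b : ℕ) (ξ : 𝔼) :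
    ‖iteratedFDeriv ℝ b (gradient Φ) ξ‖ = ‖iteratedFDeriv ℝ (b+1) Φ ξ‖ := by
  rw [grad_eq]
  rw [show (fun ξ => (InnerProductSpace.toDual ℝ (EuclideanSpace ℝ (Fin d))).symm (fderiv ℝ Φ ξ))
      = ((InnerProductSpace.toDual ℝ (EuclideanSpace ℝ (Fin d))).symm ∘ fderiv ℝ Φ) from rfl]
  rw [LinearIsometryEquiv.norm_iteratedFDeriv_comp_left, norm_iteratedFDeriv_fderiv]

lemma contDiff_grad {Φ : 𝔼 → ℝ} (hΦ : ContDiff ℝ (⊤:ℕ∞) Φ) :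
    ContDiff ℝ (⊤:ℕ∞) (gradient Φ) := by
  rw [grad_eq]
  exact (InnerProductSpace.toDual ℝ (EuclideanSpace ℝ (Fin d))).symm.contDiff.comp
    (hΦ.fderiv_right (by simp))

end
noncomputable section
variable {d : ℕ}
local notation "𝔼" => EuclideanSpace ℝ (Fin d)

lemma contDiff_u {Φ : 𝔼 → ℝ} (hΦ : ContDiff ℝ (⊤:ℕ∞) Φ) :
    ContDiff ℝ (⊤:ℕ∞) (fun η => (inner ℝ (gradient Φ η) (gradient Φ η) : ℝ)) :=
  (contDiff_grad hΦ).inner ℝ (contDiff_grad hΦ)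

lemma u_bound {Φ : 𝔼 → ℝ} (hΦ : ContDiff ℝ (⊤:ℕ∞) Φ) {M : ℝ} {n : ℕ} (b : ℕ)
    (hb : 1 ≤ b) (hbn : b ≤ n) (ξ : 𝔼)
    (hM : ∀ k, 2 ≤ k → k ≤ 1 + n → ‖iteratedFDeriv ℝ k Φ ξ‖ ≤ M) :
    ‖iteratedFDeriv ℝ b (fun η => (inner ℝ (gradient Φ η) (gradient Φ η) : ℝ)) ξ‖ ≤
      2^b * (M * ‖gradient Φ ξ‖ + (if 2 ≤ b then M^2 else 0)) := by
  have hM0 : 0 ≤ M := le_trans (norm_nonneg _) (hM 2 le_rfl (by omega))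
  have hv : ContDiff ℝ (⊤:ℕ∞) (gradient Φ) := contDiff_grad hΦ
  have h1 := (@innerSL ℝ (EuclideanSpace ℝ (Fin d)) _ _).norm_iteratedFDeriv_le_of_bilinear_of_le_one
    hv hv ξ (n := b) (mod_cast le_top) (norm_innerSL_le ℝ)
  refine le_trans h1 ?_
  have hterm : ∀ c ∈ Finset.range (b+1), (b.choose c : ℝ) *
      ‖iteratedFDeriv ℝ c (gradient Φ) ξ‖ * ‖iteratedFDeriv ℝ (b - c) (gradient Φ) ξ‖ ≤
      (b.choose c : ℝ) * (M * ‖gradient Φ ξ‖ + (if 2 ≤ b then M^2 else 0)) := by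
    intro c hc
    rw [Finset.mem_range] at hc
    have hg0 : ‖iteratedFDeriv ℝ 0 (gradient Φ) ξ‖ = ‖gradient Φ ξ‖ := by
      rw [norm_iteratedFDeriv_zero]
    have hgM : ∀ c', 1 ≤ c' → c' ≤ n → ‖iteratedFDeriv ℝ c' (gradient Φ) ξ‖ ≤ M := by
      intro c' h1' h2'
      rw [norm_itd_grad]
      exact hM (c'+1) (by omega) (by omega)
    have hδ : (0:ℝ) ≤ (if 2 ≤ b then M^2 else 0) := by positivity
    rcases Nat.eq_zero_or_pos c with rfl | hcpos
    · simp only [Nat.sub_zero]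
      rw [hg0]
      rw [mul_assoc]
      refine mul_le_mul_of_nonneg_left ?_ (by positivity)
      have : ‖gradient Φ ξ‖ * ‖iteratedFDeriv ℝ b (gradient Φ) ξ‖ ≤ ‖gradient Φ ξ‖ * M :=
        mul_le_mul_of_nonneg_left (hgM b hb hbn) (norm_nonneg _)
      nlinarith [norm_nonneg (gradient Φ ξ)]
    rcases Nat.lt_or_ge c b with hcb | hcb
    · -- 1 ≤ c < b, so b ≥ 2 and b - c ≥ 1
      have hb2 : 2 ≤ b := by omega
      rw [if_pos hb2, mul_assoc]
      refine mul_le_mul_of_nonneg_left ?_ (by positivity)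
      have h1' := hgM c hcpos (by omega)
      have h2' := hgM (b - c) (by omega) (by omega)
      nlinarith [norm_nonneg (iteratedFDeriv ℝ c (gradient Φ) ξ),
        norm_nonneg (iteratedFDeriv ℝ (b-c) (gradient Φ) ξ), norm_nonneg (gradient Φ ξ)]
    · -- c = b
      have hcb' : c = b := by omega
      subst hcb'
      rw [Nat.sub_self, hg0, mul_assoc]
      refine mul_le_mul_of_nonneg_left ?_ (by positivity)
      have := hgM c hcpos (by omega)
      nlinarith [norm_nonneg (gradient Φ ξ)]
  refine le_trans (Finset.sum_le_sum hterm) ?_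
  rw [← Finset.sum_mul]
  refine mul_le_mul_of_nonneg_right ?_ (by positivity)
  rw [← Nat.cast_sum, Nat.sum_range_choose]
  push_cast
  exact le_refl _
end

lemma sum_inv_shift {g : ℝ} (hg : g ≠ 0) (a b : ℕ) :
    (∑ k ∈ Finset.Icc (a+1) (b+1), (g^k)⁻¹) * g = ∑ k ∈ Finset.Icc a b, (g^k)⁻¹ := by
  rw [← Finset.map_add_right_Icc, Finset.sum_map, Finset.sum_mul]
  refine Finset.sum_congr rfl fun k _ => ?_
  simp only [addRightEmbedding_apply]
  rw [pow_succ, mul_inv, mul_assoc, inv_mul_cancel₀ hg, mul_one]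

lemma sum_inv_subset {g : ℝ} (hg : 0 ≤ g) {a b a' b' : ℕ} (h1 : a' ≤ a) (h2 : b ≤ b') :
    (∑ k ∈ Finset.Icc a b, (g^k)⁻¹) ≤ ∑ k ∈ Finset.Icc a' b', (g^k)⁻¹ := by
  refine Finset.sum_le_sum_of_subset_of_nonneg (Finset.Icc_subset_Icc h1 h2) ?_
  intro k _ _
  positivity

noncomputable section
variable {d : ℕ}
local notation "𝔼" => EuclideanSpace ℝ (Fin d)

lemma gip_arith {X Y Sj S g M C cN δ : ℝ} {n j m : ℕ}
    (hX0 : 0 ≤ X) (hY0 : 0 ≤ Y) (hC : 0 ≤ C) (hM0 : 0 ≤ M) (hS0 : 0 ≤ S)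
    (hSj0 : 0 ≤ Sj) (hδ0 : 0 ≤ δ) (hg0 : 0 ≤ g) (hjn : j ≤ n) (hcN : 0 ≤ cN)
    (hIH : X ≤ C * (M+1)^(2*j) * Sj) (hUb : Y ≤ 2^(n-j+1) * (M*g + δ))
    (h1 : Sj * g ≤ S) (h2 : δ * Sj ≤ M^2 * S) :
    cN * ((m:ℝ) * X) * Y ≤ cN * ((m:ℝ) * C * 2^(n+1)) * ((M+1)^(2*(n+1)) * S) := by
  have hA : Sj * (M * g + δ) ≤ (M + M^2) * S := by
    have expand : Sj * (M * g + δ) = M*(Sj * g) + δ*Sj := by ring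
    rw [expand]
    have t1 : M*(Sj * g) ≤ M*S := mul_le_mul_of_nonneg_left h1 hM0
    linarith
  have hB : (M + M^2) ≤ (M+1)^2 := by nlinarith
  have step1 : (m:ℝ) * X * Y ≤ (m:ℝ) * (C * (M+1)^(2*j) * Sj)
      * (2^(n-j+1) * (M * g + δ)) := by
    refine mul_le_mul (mul_le_mul_of_nonneg_left hIH (by positivity)) hUb hY0 ?_
    exact mul_nonneg (by positivity) (mul_nonneg (mul_nonneg hC (by positivity)) hSj0)
  have step2 : (m:ℝ) * (C * (M+1)^(2*j) * Sj) * (2^(n-j+1) * (M * g + δ))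
      ≤ ((m:ℝ) * C * 2^(n+1)) * ((M+1)^(2*(n+1)) * S) := by
    have r1 : (m:ℝ) * (C * (M+1)^(2*j) * Sj) * (2^(n-j+1) * (M * g + δ))
        = ((m:ℝ) * C * 2^(n-j+1)) * ((M+1)^(2*j) * (Sj * (M * g + δ))) := by
      ring
    rw [r1]
    have c1 : (M+1)^(2*j) * (Sj * (M * g + δ)) ≤ (M+1)^(2*(n+1)) * S := by
      calc (M+1)^(2*j) * (Sj * (M * g + δ))
          ≤ (M+1)^(2*j) * ((M + M^2) * S) :=
            mul_le_mul_of_nonneg_left hA (by positivity)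
        _ ≤ (M+1)^(2*j) * ((M+1)^2 * S) :=
            mul_le_mul_of_nonneg_left (mul_le_mul_of_nonneg_right hB hS0) (by positivity)
        _ = (M+1)^(2*j+2) * S := by rw [pow_add]; ring
        _ ≤ (M+1)^(2*(n+1)) * S := by
            refine mul_le_mul_of_nonneg_right ?_ hS0
            exact pow_le_pow_right₀ (by linarith) (by omega)
    have c2 : ((m:ℝ) * C * 2^(n-j+1)) ≤ ((m:ℝ) * C * 2^(n+1)) := by
      refine mul_le_mul_of_nonneg_left ?_ (mul_nonneg (by positivity) hC)
      exact pow_le_pow_right₀ one_le_two (by omega)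
    refine mul_le_mul c2 c1 ?_ ?_
    · refine mul_nonneg (by positivity) ?_
      refine mul_nonneg hSj0 ?_
      have : 0 ≤ M * g := mul_nonneg hM0 hg0
      linarith
    · exact mul_nonneg (mul_nonneg (by positivity) hC) (by positivity)
  calc cN * ((m:ℝ) * X) * Y = cN * ((m:ℝ) * X * Y) := by ring
    _ ≤ cN * (((m:ℝ) * C * 2^(n+1)) * ((M+1)^(2*(n+1)) * S)) :=
        mul_le_mul_of_nonneg_left (le_trans step1 step2) hcN
    _ = cN * ((m:ℝ) * C * 2^(n+1)) * ((M+1)^(2*(n+1)) * S) := by ring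

def GIP (d n m : ℕ) (C : ℝ) : Prop :=
  ∀ (Φ : EuclideanSpace ℝ (Fin d) → ℝ) (W : Set (EuclideanSpace ℝ (Fin d))) (M : ℝ)
    (ξ : EuclideanSpace ℝ (Fin d)),
    ContDiff ℝ (⊤:ℕ∞) Φ → IsOpen W → (∀ η ∈ W, gradient Φ η ≠ 0) → ξ ∈ W → 0 ≤ M →
    (∀ k, 2 ≤ k → k ≤ 1 + n → ‖iteratedFDeriv ℝ k Φ ξ‖ ≤ M) →
    ‖iteratedFDerivWithin ℝ n
        (fun η => ((inner ℝ (gradient Φ η) (gradient Φ η) : ℝ) ^ m)⁻¹) W ξ‖ ≤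
      C * (M+1)^(2*n) * ∑ k ∈ Finset.Icc (2*m + min n 1) (2*m + n), (‖gradient Φ ξ‖^k)⁻¹


lemma gip_zero (d m : ℕ) : GIP d 0 m 1 := by
  intro Φ W M ξ hΦ hW hWg hξ hM0 hM
  have hgpos : 0 < ‖gradient Φ ξ‖ := norm_pos_iff.2 (hWg ξ hξ)
  rw [norm_iteratedFDerivWithin_zero]
  simp only [Nat.min_zero, Nat.add_zero, Nat.zero_min, Finset.Icc_self,
    Finset.sum_singleton, Nat.mul_zero, pow_zero, one_mul]
  rw [real_inner_self_eq_norm_sq, ← pow_mul, Real.norm_eq_abs,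
    abs_of_nonneg (by positivity)]

lemma gip_step (d n m : ℕ) (hm : 1 ≤ m) (Cf : ℕ → ℝ) (hCf0 : ∀ j, 0 ≤ Cf j)
    (hCf : ∀ j, j < n+1 → GIP d j (m+1) (Cf j)) :
    GIP d (n+1) m (∑ j ∈ Finset.range (n+1), (n.choose j : ℝ) * ((m:ℝ) * Cf j * 2^(n+1))) := by
  intro Φ W M ξ hΦ hW hWg hξ hM0 hM
  have hgne : gradient Φ ξ ≠ 0 := hWg ξ hξ
  have hgpos : 0 < ‖gradient Φ ξ‖ := norm_pos_iff.2 hgne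
  have hWu : UniqueDiffOn ℝ W := hW.uniqueDiffOn
  set u : EuclideanSpace ℝ (Fin d) → ℝ :=
    fun η => (inner ℝ (gradient Φ η) (gradient Φ η) : ℝ) with hu_def
  have hu : ContDiff ℝ (⊤:ℕ∞) u := contDiff_u hΦ
  have hupos : ∀ η ∈ W, 0 < u η := by
    intro η hη
    have h : u η = ‖gradient Φ η‖^2 := real_inner_self_eq_norm_sq _
    rw [h]
    exact pow_pos (norm_pos_iff.2 (hWg η hη)) 2
  have hBm1cd : ContDiffOn ℝ (⊤:ℕ∞) (fun η => ((u η) ^ (m+1))⁻¹) W :=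
    ((hu.pow (m+1)).contDiffOn).inv (fun η hη => pow_ne_zero _ (hupos η hη).ne')
  have stepA : ‖iteratedFDerivWithin ℝ (n+1) (fun η => ((u η) ^ m)⁻¹) W ξ‖
      = ‖iteratedFDerivWithin ℝ n (fderivWithin ℝ (fun η => ((u η) ^ m)⁻¹) W) W ξ‖ :=
    (norm_iteratedFDerivWithin_fderivWithin hWu hξ).symm
  have hEq : Set.EqOn (fderivWithin ℝ (fun η => ((u η) ^ m)⁻¹) W)
      (fun η => ((-(m:ℝ)) • ((u η ^ (m+1))⁻¹)) • fderiv ℝ u η) W := by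
    intro η hη
    have hune : u η ≠ 0 := (hupos η hη).ne'
    have hud : HasFDerivAt u (fderiv ℝ u η) η :=
      (hu.differentiable (by simp) η).hasFDerivAt
    have hder : HasDerivAt (fun t : ℝ => (t^m)⁻¹)
        (-(↑m * u η ^ (m-1)) / (u η ^ m) ^ 2) (u η) :=
      (hasDerivAt_pow m (u η)).inv (pow_ne_zero _ hune)
    have hcomp := hder.comp_hasFDerivAt η hud
    have hkey : -((m:ℝ) * u η ^ (m-1)) / (u η ^ m) ^ 2
        = (-(m:ℝ)) • ((u η ^ (m+1))⁻¹) := by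
      have h2 : (u η ^ m) ^ 2 = u η ^ (m-1) * u η ^ (m+1) := by
        rw [← pow_mul, ← pow_add]; congr 1; omega
      have hpne : u η ^ (m-1) ≠ 0 := pow_ne_zero _ hune
      have hpne2 : u η ^ (m+1) ≠ 0 := pow_ne_zero _ hune
      rw [h2, smul_eq_mul]
      field_simp
    rw [fderivWithin_of_isOpen hW hη]
    show fderiv ℝ (fun η => ((u η) ^ m)⁻¹) η = ((-(m:ℝ)) • ((u η ^ (m+1))⁻¹)) • fderiv ℝ u η
    rw [← hkey]
    exact hcomp.fderiv
  rw [show (fun η : EuclideanSpace ℝ (Fin d) =>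
      ((inner ℝ (gradient Φ η) (gradient Φ η) : ℝ) ^ m)⁻¹)
      = (fun η => ((u η) ^ m)⁻¹) from rfl]
  rw [stepA, iteratedFDerivWithin_congr hEq hξ]
  have hfcd : ContDiffOn ℝ (⊤:ℕ∞) (fun η => (-(m:ℝ)) • ((u η ^ (m+1))⁻¹)) W :=
    hBm1cd.const_smul _
  have hgcd : ContDiffOn ℝ (⊤:ℕ∞) (fun η => fderiv ℝ u η) W :=
    (hu.fderiv_right (by simp)).contDiffOn
  have hLeib := norm_iteratedFDerivWithin_smul_le (𝕜 := ℝ) hfcd hgcd hWu hξ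
    (n := n) (mod_cast le_top)
  refine le_trans hLeib ?_
  have hmin : min (n+1) 1 = 1 := by omega
  rw [hmin]
  have hg1 : (0:ℝ) < ‖gradient Φ ξ‖ := hgpos
  set S := ∑ k ∈ Finset.Icc (2*m+1) (2*m+(n+1)), (‖gradient Φ ξ‖^k)⁻¹ with hS_def
  have hS0 : 0 ≤ S := Finset.sum_nonneg fun k _ => by positivity
  have key : ∀ j ∈ Finset.range (n+1),
      (n.choose j : ℝ) * ‖iteratedFDerivWithin ℝ j
          (fun η => (-(m:ℝ)) • ((u η ^ (m+1))⁻¹)) W ξ‖ *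
        ‖iteratedFDerivWithin ℝ (n-j) (fun η => fderiv ℝ u η) W ξ‖ ≤
      ((n.choose j : ℝ) * ((m:ℝ) * Cf j * 2^(n+1))) * ((M+1)^(2*(n+1)) * S) := by
    intro j hj
    rw [Finset.mem_range] at hj
    have hjn : j ≤ n := by omega
    have e1 : iteratedFDerivWithin ℝ j (fun η => (-(m:ℝ)) • ((u η ^ (m+1))⁻¹)) W ξ
        = (-(m:ℝ)) • iteratedFDerivWithin ℝ j (fun η => ((u η ^ (m+1))⁻¹)) W ξ :=
      by exact iteratedFDerivWithin_const_smul_apply (a := -(m:ℝ))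
          (f := fun η => ((u η ^ (m+1))⁻¹))
          ((hBm1cd ξ hξ).of_le (by exact_mod_cast le_top)) hWu hξ
    have hX : ‖iteratedFDerivWithin ℝ j (fun η => (-(m:ℝ)) • ((u η ^ (m+1))⁻¹)) W ξ‖
        = (m:ℝ) * ‖iteratedFDerivWithin ℝ j (fun η => ((u η ^ (m+1))⁻¹)) W ξ‖ := by
      rw [e1, norm_smul]
      simp
    set X := ‖iteratedFDerivWithin ℝ j (fun η => ((u η ^ (m+1))⁻¹)) W ξ‖ with hXdef
    set Sj := ∑ k ∈ Finset.Icc (2*(m+1) + min j 1) (2*(m+1) + j), (‖gradient Φ ξ‖^k)⁻¹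
      with hSjdef
    have hSj0 : 0 ≤ Sj := Finset.sum_nonneg fun k _ => by positivity
    have hIH : X ≤ Cf j * (M+1)^(2*j) * Sj := by
      have h := hCf j (by omega) Φ W M ξ hΦ hW hWg hξ hM0
        (fun k h1 h2 => hM k h1 (by omega))
      exact h
    have e2 : iteratedFDerivWithin ℝ (n-j) (fun η => fderiv ℝ u η) W ξ
        = iteratedFDeriv ℝ (n-j) (fun η => fderiv ℝ u η) ξ :=
      iteratedFDerivWithin_of_isOpen _ hW hξ
    have hY : ‖iteratedFDerivWithin ℝ (n-j) (fun η => fderiv ℝ u η) W ξ‖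
        = ‖iteratedFDeriv ℝ (n-j+1) u ξ‖ := by
      rw [e2]
      exact norm_iteratedFDeriv_fderiv
    set Y := ‖iteratedFDeriv ℝ (n-j+1) u ξ‖ with hYdef
    set δ : ℝ := if 2 ≤ n-j+1 then M^2 else 0 with hδdef
    have hδ0 : 0 ≤ δ := by rw [hδdef]; split <;> positivity
    have hUb : Y ≤ 2^(n-j+1) * (M * ‖gradient Φ ξ‖ + δ) := by
      have h := u_bound hΦ (n := n+1) (n-j+1) (by omega) (by omega) ξ hM
      exact h
    have h1 : Sj * ‖gradient Φ ξ‖ ≤ S := by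
      have ha : 2*(m+1) + min j 1 = (2*m+1+min j 1)+1 := by omega
      have hb2 : 2*(m+1) + j = (2*m+1+j)+1 := by omega
      rw [hSjdef, ha, hb2, sum_inv_shift hg1.ne' _ _]
      exact sum_inv_subset hg1.le (by omega) (by omega)
    have h2 : δ * Sj ≤ M^2 * S := by
      rw [hδdef]
      split
      · next hcase =>
        refine mul_le_mul_of_nonneg_left ?_ (by positivity)
        exact sum_inv_subset hg1.le (by omega) (by omega)
      · next hcase =>
        rw [zero_mul]
        exact mul_nonneg (by positivity) hS0
    rw [hX, hY]
    exact gip_arith (norm_nonneg _) (norm_nonneg _) (hCf0 j) hM0 hS0 hSj0 hδ0 hg1.le hjn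
      (Nat.cast_nonneg _) hIH hUb h1 h2
  refine le_trans (Finset.sum_le_sum key) ?_
  rw [← Finset.sum_mul, mul_assoc]


lemma inv_pow_bound (d : ℕ) : ∀ n m : ℕ, 1 ≤ m → ∃ C : ℝ, 0 ≤ C ∧ GIP d n m C := by
  intro n
  induction n using Nat.strong_induction_on with
  | _ n IH =>
  match n with
  | 0 => exact fun m hm => ⟨1, zero_le_one, gip_zero d m⟩
  | (n+1) =>
    intro m hm
    have H0 : ∀ j : ℕ, ∃ Cj : ℝ, 0 ≤ Cj ∧ (j < n+1 → GIP d j (m+1) Cj) := by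
      intro j
      by_cases h : j < n + 1
      · obtain ⟨Cj, h0, hb⟩ := IH j h (m+1) (by omega)
        exact ⟨Cj, h0, fun _ => hb⟩
      · exact ⟨0, le_rfl, fun h' => absurd h' h⟩
    choose Cf hCf0 hCf using H0
    exact ⟨_, Finset.sum_nonneg fun j _ => mul_nonneg (Nat.cast_nonneg _)
      (mul_nonneg (mul_nonneg (Nat.cast_nonneg _) (hCf0 j)) (by positivity)),
      gip_step d n m hm Cf hCf0 (fun j hj => hCf j hj)⟩
lemma fin_arith {φn A X Sj S M C cN : ℝ} {r n : ℕ}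
    (hX0 : 0 ≤ X) (hA0 : 0 ≤ A) (hC0 : 0 ≤ C)
    (hcN : 0 ≤ cN) (hφ : φn ≤ A) (hX : X ≤ C * (M+1)^r * Sj)
    (hprod : A * ((M+1)^r * Sj) ≤ (M+1)^(2*n) * S) :
    cN * φn * X ≤ cN * C * ((M+1)^(2*n) * S) := by
  calc cN * φn * X ≤ cN * A * (C * (M+1)^r * Sj) := by
        refine mul_le_mul (mul_le_mul_of_nonneg_left hφ hcN) hX hX0 (mul_nonneg hcN hA0)
    _ = cN * C * (A * ((M+1)^r * Sj)) := by ring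
    _ ≤ cN * C * ((M+1)^(2*n) * S) := mul_le_mul_of_nonneg_left hprod (mul_nonneg hcN hC0)

lemma hprod_ge1 {M Sj S : ℝ} {r n : ℕ} (hM0 : 0 ≤ M) (hS0 : 0 ≤ S) (hSj0 : 0 ≤ Sj)
    (hr : r + 1 ≤ 2*n) (hSj : Sj ≤ S) : M * ((M+1)^r * Sj) ≤ (M+1)^(2*n) * S := by
  calc M * ((M+1)^r * Sj) = (M*(M+1)^r) * Sj := by ring
    _ ≤ (M+1)^(r+1) * S := by
        refine mul_le_mul ?_ hSj hSj0 (by positivity)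
        rw [pow_succ]
        calc M*(M+1)^r = (M+1)^r * M := by ring
          _ ≤ (M+1)^r * (M+1) := mul_le_mul_of_nonneg_left (by linarith) (by positivity)
    _ ≤ (M+1)^(2*n) * S := mul_le_mul_of_nonneg_right
        (pow_le_pow_right₀ (by linarith) hr) hS0

end

noncomputable def phaseSemi (d k : ℕ) (V : Set (EuclideanSpace ℝ (Fin d)))
    (Φ : EuclideanSpace ℝ (Fin d) → ℝ) : ℝ :=
  ∑ n ∈ Finset.Icc 2 k, sSup ((fun ξ => ‖iteratedFDeriv ℝ n Φ ξ‖) '' V)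

theorem stmt10 (d n : ℕ) (hn : 1 ≤ n) (i : Fin d) :
    ∃ F : ℝ → ℝ, Monotone F ∧ (∀ x, 0 ≤ F x) ∧
      ∀ (Φ : EuclideanSpace ℝ (Fin d) → ℝ) (V : Set (EuclideanSpace ℝ (Fin d))),
        ContDiff ℝ (⊤ : ℕ∞) Φ → IsOpen V →
        (∀ k ∈ Finset.Icc 2 (1 + n),
          BddAbove ((fun ξ => ‖iteratedFDeriv ℝ k Φ ξ‖) '' V)) →
        ∀ ξ ∈ V, gradient Φ ξ ≠ 0 →
          ‖iteratedFDeriv ℝ n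
              (fun η => fderiv ℝ Φ η (EuclideanSpace.single i 1) / ‖gradient Φ η‖ ^ 2)
              ξ‖ ≤
            F (phaseSemi d (1 + n) V Φ) *
              ∑ k ∈ Finset.Icc 2 (1 + n), (‖gradient Φ ξ‖ ^ k)⁻¹ := by
  have hch : ∀ j : ℕ, ∃ C : ℝ, 0 ≤ C ∧ GIP d j 1 C := fun j => inv_pow_bound d j 1 le_rfl
  choose C0 hC00 hC0 using hch
  set Ctot : ℝ := ∑ j ∈ Finset.range (n+1), (n.choose j : ℝ) * C0 (n - j) with hCtot_def
  have hCt : 0 ≤ Ctot :=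
    Finset.sum_nonneg fun j _ => mul_nonneg (Nat.cast_nonneg _) (hC00 _)
  refine ⟨fun x => Ctot * (max x 0 + 1)^(2*n), ?_, ?_, ?_⟩
  · intro a b hab
    refine mul_le_mul_of_nonneg_left ?_ hCt
    refine pow_le_pow_left₀ (by positivity) ?_ _
    exact add_le_add_left (max_le_max hab le_rfl) 1
  · intro x
    exact mul_nonneg hCt (by positivity)
  · intro Φ V hΦ hV hBdd ξ hξV hgrad
    set M := phaseSemi d (1+n) V Φ with hM_def
    have hsup : ∀ k, 2 ≤ k → k ≤ 1+n →
        ‖iteratedFDeriv ℝ k Φ ξ‖ ≤ sSup ((fun ζ => ‖iteratedFDeriv ℝ k Φ ζ‖) '' V) :=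
      fun k h1 h2 => le_csSup (hBdd k (Finset.mem_Icc.2 ⟨h1, h2⟩)) ⟨ξ, hξV, rfl⟩
    have hsup0 : ∀ k ∈ Finset.Icc 2 (1+n),
        0 ≤ sSup ((fun ζ => ‖iteratedFDeriv ℝ k Φ ζ‖) '' V) := fun k hk => by
      rw [Finset.mem_Icc] at hk
      exact le_trans (norm_nonneg _) (hsup k hk.1 hk.2)
    have hM0 : 0 ≤ M := Finset.sum_nonneg hsup0
    have hMk : ∀ k, 2 ≤ k → k ≤ 1+n → ‖iteratedFDeriv ℝ k Φ ξ‖ ≤ M := by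
      intro k h1 h2
      refine le_trans (hsup k h1 h2) ?_
      exact Finset.single_le_sum hsup0 (Finset.mem_Icc.2 ⟨h1, h2⟩)
    set W := V ∩ {η | gradient Φ η ≠ 0} with hW_def
    have hWopen : IsOpen W := by
      refine hV.inter ?_
      have : {η | gradient Φ η ≠ 0} = (gradient Φ) ⁻¹' ({0}ᶜ) := rfl
      rw [this]
      exact isOpen_compl_singleton.preimage (contDiff_grad hΦ).continuous
    have hξW : ξ ∈ W := ⟨hξV, hgrad⟩
    have hWg : ∀ η ∈ W, gradient Φ η ≠ 0 := fun η hη => hη.2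
    have hWu : UniqueDiffOn ℝ W := hWopen.uniqueDiffOn
    have hgpos : 0 < ‖gradient Φ ξ‖ := norm_pos_iff.2 hgrad
    have hfun : (fun η => fderiv ℝ Φ η (EuclideanSpace.single i 1) / ‖gradient Φ η‖ ^ 2)
        = fun η => (fderiv ℝ Φ η (EuclideanSpace.single i 1)) *
            (((inner ℝ (gradient Φ η) (gradient Φ η) : ℝ)) ^ 1)⁻¹ := by
      funext η
      rw [div_eq_mul_inv, pow_one, real_inner_self_eq_norm_sq]
    rw [hfun, ← iteratedFDerivWithin_of_isOpen n hWopen hξW]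
    have hφcd : ContDiff ℝ (⊤:ℕ∞) (fun η => fderiv ℝ Φ η (EuclideanSpace.single i 1)) :=
      (hΦ.fderiv_right (by simp)).clm_apply contDiff_const
    have hupos : ∀ η ∈ W, (0:ℝ) < (inner ℝ (gradient Φ η) (gradient Φ η) : ℝ) := by
      intro η hη
      have h : (inner ℝ (gradient Φ η) (gradient Φ η) : ℝ) = ‖gradient Φ η‖^2 :=
        real_inner_self_eq_norm_sq _
      rw [h]
      exact pow_pos (norm_pos_iff.2 (hWg η hη)) 2
    have hB1cd : ContDiffOn ℝ (⊤:ℕ∞)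
        (fun η => (((inner ℝ (gradient Φ η) (gradient Φ η) : ℝ)) ^ 1)⁻¹) W :=
      (((contDiff_u hΦ).pow 1).contDiffOn).inv
        (fun η hη => pow_ne_zero _ (hupos η hη).ne')
    have hLeib := norm_iteratedFDerivWithin_mul_le (𝕜 := ℝ) hφcd.contDiffOn hB1cd hWu hξW
      (n := n) (mod_cast le_top)
    refine le_trans hLeib ?_
    set S := ∑ k ∈ Finset.Icc 2 (1+n), (‖gradient Φ ξ‖^k)⁻¹ with hS_def
    have hS0 : 0 ≤ S := Finset.sum_nonneg fun k _ => by positivity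
    have key : ∀ j ∈ Finset.range (n+1),
        (n.choose j : ℝ) * ‖iteratedFDerivWithin ℝ j
            (fun η => fderiv ℝ Φ η (EuclideanSpace.single i 1)) W ξ‖ *
          ‖iteratedFDerivWithin ℝ (n-j)
            (fun η => (((inner ℝ (gradient Φ η) (gradient Φ η) : ℝ)) ^ 1)⁻¹) W ξ‖ ≤
        ((n.choose j : ℝ) * C0 (n-j)) * ((M+1)^(2*n) * S) := by
      intro j hj
      rw [Finset.mem_range] at hj
      have hjn : j ≤ n := by omega
      have hX : ‖iteratedFDerivWithin ℝ (n-j)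
          (fun η => (((inner ℝ (gradient Φ η) (gradient Φ η) : ℝ)) ^ 1)⁻¹) W ξ‖ ≤
          C0 (n-j) * (M+1)^(2*(n-j)) *
            ∑ k ∈ Finset.Icc (2*1 + min (n-j) 1) (2*1 + (n-j)), (‖gradient Φ ξ‖^k)⁻¹ :=
        hC0 (n-j) Φ W M ξ hΦ hWopen hWg hξW hM0
          (fun k h1 h2 => hMk k h1 (by omega))
      set Sj := ∑ k ∈ Finset.Icc (2*1 + min (n-j) 1) (2*1 + (n-j)), (‖gradient Φ ξ‖^k)⁻¹
        with hSj_def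
      have hSj0 : 0 ≤ Sj := Finset.sum_nonneg fun k _ => by positivity
      rcases Nat.eq_zero_or_pos j with rfl | hjpos
      · -- j = 0 : use the gradient factor
        have hφ : ‖iteratedFDerivWithin ℝ 0
            (fun η => fderiv ℝ Φ η (EuclideanSpace.single i 1)) W ξ‖ ≤ ‖gradient Φ ξ‖ := by
          rw [norm_iteratedFDerivWithin_zero, norm_grad]
          calc ‖fderiv ℝ Φ ξ (EuclideanSpace.single i 1)‖
              ≤ ‖fderiv ℝ Φ ξ‖ * ‖EuclideanSpace.single i (1:ℝ)‖ :=
                ContinuousLinearMap.le_opNorm _ _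
            _ = ‖fderiv ℝ Φ ξ‖ := by rw [EuclideanSpace.norm_single]; simp
        have hprod : ‖gradient Φ ξ‖ * ((M+1)^(2*(n-0)) * Sj) ≤ (M+1)^(2*n) * S := by
          have hshift : Sj * ‖gradient Φ ξ‖ ≤ S := by
            have ha : 2*1 + min (n-0) 1 = 2+1 := by omega
            have hb2 : 2*1 + (n-0) = (1+n)+1 := by omega
            have h3 : (2:ℕ)+1 = 2+1 := rfl
            rw [hSj_def, ha, hb2]
            rw [show ((2:ℕ)+1) = 2+1 from rfl]
            calc (∑ k ∈ Finset.Icc (2+1) ((1+n)+1), (‖gradient Φ ξ‖^k)⁻¹) * ‖gradient Φ ξ‖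
                = ∑ k ∈ Finset.Icc 2 (1+n), (‖gradient Φ ξ‖^k)⁻¹ :=
                  sum_inv_shift hgpos.ne' 2 (1+n)
              _ ≤ S := le_of_eq rfl
          have e : n - 0 = n := rfl
          rw [e]
          calc ‖gradient Φ ξ‖ * ((M+1)^(2*n) * Sj)
              = (M+1)^(2*n) * (Sj * ‖gradient Φ ξ‖) := by ring
            _ ≤ (M+1)^(2*n) * S := mul_le_mul_of_nonneg_left hshift (by positivity)
        exact fin_arith (norm_nonneg _) hgpos.le (hC00 _) (Nat.cast_nonneg _) hφ hX hprod
      · -- j ≥ 1 : use the M bound on the φ factor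
        have hφ : ‖iteratedFDerivWithin ℝ j
            (fun η => fderiv ℝ Φ η (EuclideanSpace.single i 1)) W ξ‖ ≤ M := by
          have hfd : ContDiff ℝ (⊤:ℕ∞) (fun η => fderiv ℝ Φ η) := hΦ.fderiv_right (by simp)
          have h1 := norm_iteratedFDerivWithin_clm_apply_const
            (f := fun η => fderiv ℝ Φ η) (c := EuclideanSpace.single i (1:ℝ))
            hfd.contDiffWithinAt hWu hξW (n := j) (mod_cast le_top)
          refine le_trans h1 ?_
          rw [EuclideanSpace.norm_single, norm_one, one_mul]
          rw [iteratedFDerivWithin_of_isOpen j hWopen hξW]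
          have h2 : ‖iteratedFDeriv ℝ j (fun η => fderiv ℝ Φ η) ξ‖
              = ‖iteratedFDeriv ℝ (j+1) Φ ξ‖ := norm_iteratedFDeriv_fderiv
          rw [h2]
          exact hMk (j+1) (by omega) (by omega)
        have hSjS : Sj ≤ S := sum_inv_subset hgpos.le (by omega) (by omega)
        have hprod : M * ((M+1)^(2*(n-j)) * Sj) ≤ (M+1)^(2*n) * S :=
          hprod_ge1 hM0 hS0 hSj0 (by omega) hSjS
        exact fin_arith (norm_nonneg _) hM0 (hC00 _) (Nat.cast_nonneg _) hφ hX hprod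
    refine le_trans (Finset.sum_le_sum key) ?_
    rw [← Finset.sum_mul]
    have hfin : (∑ j ∈ Finset.range (n+1), ((n.choose j : ℝ) * C0 (n-j))) * ((M+1)^(2*n) * S)
        = Ctot * (max M 0 + 1)^(2*n) * S := by
      rw [max_eq_left hM0, hCtot_def]
      ring
    rw [hfin]
end

section
/- Let Φ : ℝ^d → ℝ be smooth and let V be an open set on which M_k := Σ_{2 ≤ |α| ≤ k} sup_{ξ∈V} |∂^α Φ(ξ)| < ∞. Then for every multi-index α with |α| ≥ 1 there exists a nondecreasing function F : [0,∞) → [0,∞) (depending only on d and |α|) such that for every ξ ∈ V with 0 < |∇Φ(ξ)| ≤ 2 one has |∂^α (|∇Φ|)(ξ)| ≤ F(M_{|α|+1}) |∇Φ(ξ)|^{1−|α|}, where |∇Φ| denotes the function ξ ↦ |∇Φ(ξ)|. -/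
open Set

/-- Iterated derivatives of the norm, away from the origin, are bounded by a constant
times a negative power of the norm. -/
lemma normDeriv_bound (d m : ℕ) :
    ∃ K : ℝ, 0 ≤ K ∧ ∀ i ≤ m, ∀ v : EuclideanSpace ℝ (Fin d), v ≠ 0 →
      ‖iteratedFDerivWithin ℝ i (fun w : EuclideanSpace ℝ (Fin d) => ‖w‖)
        {w : EuclideanSpace ℝ (Fin d) | w ≠ 0} v‖ ≤ K * ‖v‖ ^ ((1 : ℤ) - (i : ℤ)) := by
  classical
  set E := EuclideanSpace ℝ (Fin d)
  set N : E → ℝ := fun w => ‖w‖ with hNdef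
  set t : Set E := {w : E | w ≠ 0} with htdef
  have ht : IsOpen t := isOpen_ne
  have htu : UniqueDiffOn ℝ t := ht.uniqueDiffOn
  have hN : ∀ j : WithTop ℕ∞, ContDiffOn ℝ j N t := fun j v hv =>
    (contDiffAt_norm ℝ hv).contDiffWithinAt
  have hcont : ∀ i : ℕ, ∃ C : ℝ, ∀ u ∈ Metric.sphere (0 : E) 1,
      ‖iteratedFDerivWithin ℝ i N t u‖ ≤ C := by
    intro i
    have h1 : ContinuousOn (iteratedFDerivWithin ℝ i N t) t :=
      (hN i).continuousOn_iteratedFDerivWithin le_rfl htu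
    have hsub : Metric.sphere (0 : E) 1 ⊆ t := by
      intro u hu
      have h2 : ‖u‖ = 1 := mem_sphere_zero_iff_norm.1 hu
      simp only [htdef, Set.mem_setOf_eq]
      intro h
      rw [h] at h2; simp at h2
    exact (isCompact_sphere (0 : E) 1).exists_bound_of_continuousOn (h1.mono hsub)
  choose C0 hC0 using hcont
  set K : ℝ := ∑ j ∈ Finset.range (m + 1), |C0 j| with hKdef
  have hK0 : 0 ≤ K := Finset.sum_nonneg fun j _ => abs_nonneg _
  refine ⟨K, hK0, ?_⟩
  intro i hi v hv
  set r : ℝ := ‖v‖ with hrdef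
  have hr0 : 0 < r := norm_pos_iff.2 hv
  have hrne : r ≠ 0 := hr0.ne'
  have hirne : r⁻¹ ≠ 0 := inv_ne_zero hrne
  set u : E := r⁻¹ • v with hudef
  have hu1 : ‖u‖ = 1 := by
    rw [hudef, norm_smul, norm_inv, Real.norm_eq_abs, abs_of_pos hr0]
    field_simp
    exact hrdef.symm
  have hus : u ∈ Metric.sphere (0 : E) 1 := by
    simpa [mem_sphere_zero_iff_norm] using hu1
  have hut : u ∈ t := by
    simp only [htdef, Set.mem_setOf_eq]
    intro h
    rw [h] at hu1; simp at hu1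
  have hvt : v ∈ t := hv
  set e : E ≃L[ℝ] E := (LinearEquiv.smulOfNeZero ℝ E r⁻¹ hirne).toContinuousLinearEquiv with hedef
  have hev : e v = u := rfl
  have hpre : (⇑e) ⁻¹' t = t := by
    ext w
    simp only [htdef, Set.mem_preimage, Set.mem_setOf_eq]
    constructor
    · intro h hw; exact h (by rw [hw, show e (0:E) = r⁻¹ • (0:E) from rfl, smul_zero])
    · intro h hw
      exact h (by simpa [hirne] using (smul_eq_zero.1 (show r⁻¹ • w = 0 from hw)))
  have key := e.iteratedFDerivWithin_comp_right (f := N) htu (x := v) (by rw [hev]; exact hut) i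
  rw [hpre, hev] at key
  have hcomp : N ∘ ⇑e = r⁻¹ • N := by
    funext w
    show ‖r⁻¹ • w‖ = r⁻¹ • ‖w‖
    rw [norm_smul, norm_inv, Real.norm_eq_abs, abs_of_pos hr0, smul_eq_mul]
  rw [hcomp, iteratedFDerivWithin_const_smul_apply ((hN i) v hvt) htu hvt] at key
  -- key : r⁻¹ • iFDW i N t v = (iFDW i N t u).compContinuousLinearMap fun _ => e
  have hnorm : r⁻¹ * ‖iteratedFDerivWithin ℝ i N t v‖
      = ‖(iteratedFDerivWithin ℝ i N t u).compContinuousLinearMap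
          fun _ : Fin i => (e : E →L[ℝ] E)‖ := by
    rw [← key, norm_smul r⁻¹ (iteratedFDerivWithin ℝ i N t v), norm_inv, Real.norm_eq_abs,
      abs_of_pos hr0]
  have heL : ‖(e : E →L[ℝ] E)‖ ≤ r⁻¹ := by
    refine ContinuousLinearMap.opNorm_le_bound _ (inv_nonneg.2 hr0.le) fun w => ?_
    rw [show (e : E →L[ℝ] E) w = r⁻¹ • w from rfl, norm_smul, norm_inv, Real.norm_eq_abs,
      abs_of_pos hr0]
  have hKu : ‖iteratedFDerivWithin ℝ i N t u‖ ≤ K := by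
    refine le_trans (hC0 i u hus) (le_trans (le_abs_self _) ?_)
    exact Finset.single_le_sum (fun j _ => abs_nonneg (C0 j))
      (Finset.mem_range.2 (Nat.lt_succ_of_le hi))
  have hbound : ‖(iteratedFDerivWithin ℝ i N t u).compContinuousLinearMap
      fun _ : Fin i => (e : E →L[ℝ] E)‖ ≤ K * r⁻¹ ^ i := by
    refine le_trans (ContinuousMultilinearMap.norm_compContinuousLinearMap_le _ _) ?_
    have hprod : (∏ _j : Fin i, ‖(e : E →L[ℝ] E)‖) ≤ r⁻¹ ^ i := by
      rw [Finset.prod_const, Finset.card_univ, Fintype.card_fin]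
      exact pow_le_pow_left₀ (norm_nonneg _) heL i
    exact mul_le_mul hKu hprod (Finset.prod_nonneg fun _ _ => norm_nonneg _) hK0
  have hX : ‖iteratedFDerivWithin ℝ i N t v‖
      = r * ‖(iteratedFDerivWithin ℝ i N t u).compContinuousLinearMap
          fun _ : Fin i => (e : E →L[ℝ] E)‖ := by
    rw [← hnorm]
    field_simp
  have hz : r * r⁻¹ ^ i = r ^ ((1 : ℤ) - (i : ℤ)) := by
    rw [zpow_sub₀ hrne, zpow_one, zpow_natCast, inv_pow, div_eq_mul_inv]
  calc ‖iteratedFDerivWithin ℝ i N t v‖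
      = r * ‖(iteratedFDerivWithin ℝ i N t u).compContinuousLinearMap
          fun _ : Fin i => (e : E →L[ℝ] E)‖ := hX
    _ ≤ r * (K * r⁻¹ ^ i) := by
        exact mul_le_mul_of_nonneg_left hbound hr0.le
    _ = K * (r * r⁻¹ ^ i) := by ring
    _ = K * r ^ ((1 : ℤ) - (i : ℤ)) := by rw [hz]

theorem stmt11 (d n : ℕ) (hn : 1 ≤ n) :
    ∃ F : ℝ → ℝ, Monotone F ∧ (∀ x, 0 ≤ F x) ∧
      ∀ (Φ : EuclideanSpace ℝ (Fin d) → ℝ) (V : Set (EuclideanSpace ℝ (Fin d))),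
        ContDiff ℝ (⊤ : ℕ∞) Φ → IsOpen V →
        (∀ k ∈ Finset.Icc 2 (n + 1),
          BddAbove ((fun ξ => ‖iteratedFDeriv ℝ k Φ ξ‖) '' V)) →
        ∀ ξ ∈ V, 0 < ‖gradient Φ ξ‖ → ‖gradient Φ ξ‖ ≤ 2 →
          ‖iteratedFDeriv ℝ n (fun η => ‖gradient Φ η‖) ξ‖ ≤
            F (phaseSemi d (n + 1) V Φ) * ‖gradient Φ ξ‖ ^ ((1 : ℤ) - n) := by
  classical
  obtain ⟨K, hK0, hK⟩ := normDeriv_bound d n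
  set c : ℝ := (n.factorial : ℝ) * (K * 2 ^ n) with hc
  have hc0 : 0 ≤ c := by positivity
  refine ⟨fun x => c * max 1 x ^ n, ?_, ?_, ?_⟩
  · intro a b hab
    exact mul_le_mul_of_nonneg_left
      (pow_le_pow_left₀ (le_trans zero_le_one (le_max_left 1 a)) (max_le_max le_rfl hab) n) hc0
  · intro x
    have h1 : (0 : ℝ) ≤ max 1 x := le_trans zero_le_one (le_max_left 1 x)
    positivity
  · intro Φ V hΦ hV hBdd ξ hξ hpos hle2
    dsimp only
    have hr0 : 0 < ‖gradient Φ ξ‖ := hpos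
    have hGξ : gradient Φ ξ ≠ 0 := norm_pos_iff.1 hpos
    have ht : IsOpen {w : EuclideanSpace ℝ (Fin d) | w ≠ 0} := isOpen_ne
    -- smoothness of the gradient
    have hf' : ContDiff ℝ ((⊤ : ℕ∞) : WithTop ℕ∞) (fderiv ℝ Φ) :=
      hΦ.fderiv_right (by exact_mod_cast le_top)
    have hG : ContDiff ℝ ((⊤ : ℕ∞) : WithTop ℕ∞) (gradient Φ) :=
      (((InnerProductSpace.toDual ℝ (EuclideanSpace ℝ (Fin d))).symm :
        StrongDual ℝ (EuclideanSpace ℝ (Fin d)) ≃ₗᵢ[ℝ]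
          EuclideanSpace ℝ (Fin d)).contDiff).comp hf'
    have hGnorm : ∀ (i : ℕ) (x : EuclideanSpace ℝ (Fin d)),
        ‖iteratedFDeriv ℝ i (gradient Φ) x‖ = ‖iteratedFDeriv ℝ (i + 1) Φ x‖ := by
      intro i x
      rw [show gradient Φ = (⇑((InnerProductSpace.toDual ℝ (EuclideanSpace ℝ (Fin d))).symm :
          StrongDual ℝ (EuclideanSpace ℝ (Fin d)) ≃ₗᵢ[ℝ]
            EuclideanSpace ℝ (Fin d))) ∘ (fderiv ℝ Φ) from rfl,
        LinearIsometryEquiv.norm_iteratedFDeriv_comp_left, norm_iteratedFDeriv_fderiv]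
    -- bounds on derivatives of the gradient on V
    have hM0 : ∀ k ∈ Finset.Icc 2 (n + 1),
        0 ≤ sSup ((fun ζ => ‖iteratedFDeriv ℝ k Φ ζ‖) '' V) := fun k hk =>
      le_trans (norm_nonneg _) (le_csSup (hBdd k hk) ⟨ξ, hξ, rfl⟩)
    have hGbd : ∀ i, 1 ≤ i → i ≤ n →
        ‖iteratedFDeriv ℝ i (gradient Φ) ξ‖ ≤ phaseSemi d (n + 1) V Φ := by
      intro i h1 h2
      have hmem : i + 1 ∈ Finset.Icc 2 (n + 1) := Finset.mem_Icc.2 ⟨by omega, by omega⟩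
      calc ‖iteratedFDeriv ℝ i (gradient Φ) ξ‖ = ‖iteratedFDeriv ℝ (i + 1) Φ ξ‖ := hGnorm i ξ
        _ ≤ sSup ((fun ζ => ‖iteratedFDeriv ℝ (i + 1) Φ ζ‖) '' V) :=
            le_csSup (hBdd _ hmem) ⟨ξ, hξ, rfl⟩
        _ ≤ phaseSemi d (n + 1) V Φ := by
            rw [phaseSemi]
            exact Finset.single_le_sum (fun k hk => hM0 k hk) hmem
    -- the set on which we work
    have hso : IsOpen (V ∩ gradient Φ ⁻¹' {w : EuclideanSpace ℝ (Fin d) | w ≠ 0}) :=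
      hV.inter (ht.preimage hG.continuous)
    have hGξt : gradient Φ ξ ∈ {w : EuclideanSpace ℝ (Fin d) | w ≠ 0} := hGξ
    have hξs : ξ ∈ V ∩ gradient Φ ⁻¹' {w : EuclideanSpace ℝ (Fin d) | w ≠ 0} := ⟨hξ, hGξt⟩
    have hNt : ContDiffOn ℝ (n : WithTop ℕ∞) (fun w : EuclideanSpace ℝ (Fin d) => ‖w‖)
        {w : EuclideanSpace ℝ (Fin d) | w ≠ 0} := fun v hv =>
      (contDiffAt_norm ℝ hv).contDiffWithinAt
    have hGs : ContDiffOn ℝ (n : WithTop ℕ∞) (gradient Φ)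
        (V ∩ gradient Φ ⁻¹' {w : EuclideanSpace ℝ (Fin d) | w ≠ 0}) :=
      (hG.of_le (by exact_mod_cast le_top)).contDiffOn
    have hD1 : (1 : ℝ) ≤ max 1 (phaseSemi d (n + 1) V Φ) := le_max_left _ _
    have hrp : (0 : ℝ) < ‖gradient Φ ξ‖ ^ ((1 : ℤ) - (n : ℤ)) := zpow_pos hr0 _
    have hCb : ∀ i, i ≤ n →
        ‖iteratedFDerivWithin ℝ i (fun w : EuclideanSpace ℝ (Fin d) => ‖w‖)
          {w : EuclideanSpace ℝ (Fin d) | w ≠ 0} (gradient Φ ξ)‖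
          ≤ K * 2 ^ n * ‖gradient Φ ξ‖ ^ ((1 : ℤ) - (n : ℤ)) := by
      intro i hi
      have h1 := hK i hi (gradient Φ ξ) hGξ
      have hj : ((1 : ℤ) - (i : ℤ)) = ((1 : ℤ) - (n : ℤ)) + ((n - i : ℕ) : ℤ) := by
        push_cast [Nat.cast_sub hi]; ring
      rw [hj, zpow_add₀ hr0.ne', zpow_natCast] at h1
      have hpow : ‖gradient Φ ξ‖ ^ (n - i) ≤ 2 ^ n :=
        le_trans (pow_le_pow_left₀ hr0.le hle2 _) (pow_le_pow_right₀ one_le_two (Nat.sub_le n i))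
      calc ‖iteratedFDerivWithin ℝ i (fun w : EuclideanSpace ℝ (Fin d) => ‖w‖)
            {w : EuclideanSpace ℝ (Fin d) | w ≠ 0} (gradient Φ ξ)‖
          ≤ K * (‖gradient Φ ξ‖ ^ ((1 : ℤ) - (n : ℤ)) * ‖gradient Φ ξ‖ ^ (n - i)) := h1
        _ = K * ‖gradient Φ ξ‖ ^ (n - i) * ‖gradient Φ ξ‖ ^ ((1 : ℤ) - (n : ℤ)) := by ring
        _ ≤ K * 2 ^ n * ‖gradient Φ ξ‖ ^ ((1 : ℤ) - (n : ℤ)) :=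
            mul_le_mul_of_nonneg_right (mul_le_mul_of_nonneg_left hpow hK0) hrp.le
    have hDb : ∀ i, 1 ≤ i → i ≤ n →
        ‖iteratedFDerivWithin ℝ i (gradient Φ)
          (V ∩ gradient Φ ⁻¹' {w : EuclideanSpace ℝ (Fin d) | w ≠ 0}) ξ‖
          ≤ (max 1 (phaseSemi d (n + 1) V Φ)) ^ i := by
      intro i h1 h2
      rw [iteratedFDerivWithin_of_isOpen i hso hξs]
      calc ‖iteratedFDeriv ℝ i (gradient Φ) ξ‖ ≤ phaseSemi d (n + 1) V Φ := hGbd i h1 h2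
        _ ≤ max 1 (phaseSemi d (n + 1) V Φ) := le_max_right _ _
        _ ≤ (max 1 (phaseSemi d (n + 1) V Φ)) ^ i := le_self_pow₀ hD1 (by omega)
    have hmain := norm_iteratedFDerivWithin_comp_le hNt hGs (le_rfl : (n : WithTop ℕ∞) ≤ n)
      ht.uniqueDiffOn hso.uniqueDiffOn (fun x hx => hx.2) hξs hCb hDb
    have hLHS : iteratedFDerivWithin ℝ n
        ((fun w : EuclideanSpace ℝ (Fin d) => ‖w‖) ∘ gradient Φ)
        (V ∩ gradient Φ ⁻¹' {w : EuclideanSpace ℝ (Fin d) | w ≠ 0}) ξ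
        = iteratedFDeriv ℝ n (fun η => ‖gradient Φ η‖) ξ := by
      rw [iteratedFDerivWithin_of_isOpen n hso hξs]
      rfl
    rw [hLHS] at hmain
    calc ‖iteratedFDeriv ℝ n (fun η => ‖gradient Φ η‖) ξ‖
        ≤ (n.factorial : ℝ) * (K * 2 ^ n * ‖gradient Φ ξ‖ ^ ((1 : ℤ) - (n : ℤ)))
            * (max 1 (phaseSemi d (n + 1) V Φ)) ^ n := hmain
      _ = c * max 1 (phaseSemi d (n + 1) V Φ) ^ n * ‖gradient Φ ξ‖ ^ ((1 : ℤ) - (n : ℤ)) := by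
          rw [hc]; ring
end

section
/- There is a constant C_d depending only on d such that the following holds. Let Φ : ℝ^d → ℝ be smooth, b : ℝ^d → ℂ be a bounded measurable function with compact support K, and V an open neighborhood of K on which ξ ↦ ∇Φ(ξ) is injective and |det Hess Φ(ξ)| ≥ a₀ > 0. Let ψ ∈ C₀^∞(ℝ) with ψ(x) = 1 for |x| ≤ 1 and ψ(x) = 0 for |x| ≥ 2, and 0 ≤ ψ ≤ 1. Then for every λ ≥ 1, |∫_{ℝ^d} e^{iλΦ(ξ)} ψ(λ^{1/2} |∇Φ(ξ)|) b(ξ) dξ| ≤ (C_d / a₀) (sup_{ξ∈K} |b(ξ)|) λ^{-d/2}. -/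
open MeasureTheory InnerProductSpace

variable {d : ℕ}

noncomputable def dualInv (d : ℕ) :
    StrongDual ℝ (EuclideanSpace ℝ (Fin d)) →L[ℝ] EuclideanSpace ℝ (Fin d) where
  toFun := fun ℓ => (toDual ℝ (EuclideanSpace ℝ (Fin d))).symm ℓ
  map_add' := by intros; simp
  map_smul' := by intros; simp
  cont := (toDual ℝ (EuclideanSpace ℝ (Fin d))).symm.continuous

noncomputable abbrev gradDeriv (d : ℕ) (Φ : EuclideanSpace ℝ (Fin d) → ℝ)
    (ξ : EuclideanSpace ℝ (Fin d)) :
    EuclideanSpace ℝ (Fin d) →L[ℝ] EuclideanSpace ℝ (Fin d) :=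
  (dualInv d).comp (fderiv ℝ (fderiv ℝ Φ) ξ)

lemma hasFDerivAt_grad (Φ : EuclideanSpace ℝ (Fin d) → ℝ) (hΦ : ContDiff ℝ (⊤ : ℕ∞) Φ)
    (ξ : EuclideanSpace ℝ (Fin d)) :
    HasFDerivAt (gradient Φ) (gradDeriv d Φ ξ) ξ := by
  have hD : HasFDerivAt (fderiv ℝ Φ) (fderiv ℝ (fderiv ℝ Φ) ξ) ξ :=
    (((hΦ.fderiv_right (m := ((⊤:ℕ∞) : WithTop ℕ∞)) (by exact_mod_cast le_refl _)).differentiable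
      (by simp)) ξ).hasFDerivAt
  exact ((dualInv d).hasFDerivAt).comp ξ hD

lemma det_gradDeriv (Φ : EuclideanSpace ℝ (Fin d) → ℝ) (hΦ : ContDiff ℝ (⊤ : ℕ∞) Φ)
    (ξ : EuclideanSpace ℝ (Fin d)) :
    |(gradDeriv d Φ ξ).det| = |(hessM d Φ ξ).det| := by
  have key : (gradDeriv d Φ ξ).det = (hessM d Φ ξ).det := by
    show LinearMap.det _ = _
    rw [← LinearMap.det_toMatrix (EuclideanSpace.basisFun (Fin d) ℝ).toBasis]
    congr 1
    ext i j
    rw [LinearMap.toMatrix_apply]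
    simp only [OrthonormalBasis.coe_toBasis, EuclideanSpace.basisFun_apply,
      OrthonormalBasis.coe_toBasis_repr_apply, EuclideanSpace.basisFun_repr]
    have h2 : ∀ (x : EuclideanSpace ℝ (Fin d)) (k : Fin d),
        x k = @inner ℝ _ _ x (EuclideanSpace.single k (1:ℝ)) := by
      intro x k
      rw [EuclideanSpace.inner_single_right]
      simp
    show (gradDeriv d Φ ξ) (EuclideanSpace.single j 1) i = hessM d Φ ξ i j
    rw [h2 ((gradDeriv d Φ ξ) (EuclideanSpace.single j 1)) i]
    show @inner ℝ _ _ ((toDual ℝ (EuclideanSpace ℝ (Fin d))).symm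
      (fderiv ℝ (fderiv ℝ Φ) ξ (EuclideanSpace.single j 1))) (EuclideanSpace.single i (1:ℝ)) = _
    rw [InnerProductSpace.toDual_symm_apply]
    rw [hessM, iteratedFDeriv_two_apply]
    have hsym := (hΦ.contDiffAt (x := ξ)).isSymmSndFDerivAt (n := ((⊤:ℕ∞) : WithTop ℕ∞))
      (by rw [minSmoothness_of_isRCLikeNormedField]; exact WithTop.coe_le_coe.mpr (le_top : (2:ℕ∞) ≤ ⊤))
    simpa using (hsym (EuclideanSpace.single j 1) (EuclideanSpace.single i 1))
  rw [key]

theorem stmt14 (d : ℕ) :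
    ∃ C : ℝ, 0 < C ∧
      ∀ (Φ : EuclideanSpace ℝ (Fin d) → ℝ) (b : EuclideanSpace ℝ (Fin d) → ℂ)
        (V : Set (EuclideanSpace ℝ (Fin d))) (a₀ : ℝ) (ψ : ℝ → ℝ),
        ContDiff ℝ (⊤ : ℕ∞) Φ → Measurable b → HasCompactSupport b →
        (∃ B, ∀ ξ, ‖b ξ‖ ≤ B) →
        IsOpen V → tsupport b ⊆ V →
        Set.InjOn (gradient Φ) V →
        0 < a₀ → (∀ ξ ∈ V, a₀ ≤ |(hessM d Φ ξ).det|) →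
        ContDiff ℝ (⊤ : ℕ∞) ψ → HasCompactSupport ψ →
        (∀ x : ℝ, |x| ≤ 1 → ψ x = 1) → (∀ x : ℝ, 2 ≤ |x| → ψ x = 0) →
        (∀ x : ℝ, 0 ≤ ψ x ∧ ψ x ≤ 1) →
        ∀ lam : ℝ, 1 ≤ lam →
          ‖∫ ξ : EuclideanSpace ℝ (Fin d),
              Complex.exp (Complex.I * (lam : ℂ) * (Φ ξ : ℂ)) *
                ((ψ (Real.sqrt lam * ‖gradient Φ ξ‖) : ℝ) : ℂ) * b ξ‖ ≤
            C / a₀ * sSup ((fun ξ => ‖b ξ‖) '' tsupport b) * lam ^ (-(d : ℝ) / 2) := by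
  classical
  set c : ℝ := (volume (Metric.ball (0 : EuclideanSpace ℝ (Fin d)) 1)).toReal with hc
  have hc0 : 0 < c :=
    ENNReal.toReal_pos (Metric.measure_ball_pos volume _ one_pos).ne' measure_ball_lt_top.ne
  refine ⟨2 ^ d * c, by positivity, ?_⟩
  intro Φ b V a₀ ψ hΦ hbm hbc hbB hV hsub hinj ha₀ hdet hψ hψc hψ1 hψ0 hψ01 lam hlam
  obtain ⟨B, hB⟩ := hbB
  have hlam0 : (0 : ℝ) < lam := lt_of_lt_of_le one_pos hlam
  have hs0 : (0 : ℝ) < Real.sqrt lam := Real.sqrt_pos.mpr hlam0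
  set r : ℝ := 2 / Real.sqrt lam with hrdef
  have hr0 : 0 < r := by positivity
  set g := gradient Φ with hg
  have hgc : Continuous g := by
    have h1 : Continuous (fderiv ℝ Φ) :=
      (hΦ.fderiv_right (m := ((⊤ : ℕ∞) : WithTop ℕ∞)) (by exact_mod_cast le_refl _)).continuous
    exact ((toDual ℝ (EuclideanSpace ℝ (Fin d))).symm.continuous).comp h1
  set T := V ∩ g ⁻¹' Metric.closedBall 0 r with hT
  have hTm : MeasurableSet T :=
    hV.measurableSet.inter (hgc.measurable measurableSet_closedBall)
  set M := sSup ((fun ξ => ‖b ξ‖) '' tsupport b) with hM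
  have hMbdd : BddAbove ((fun ξ => ‖b ξ‖) '' tsupport b) :=
    ⟨B, by rintro x ⟨ξ, _, rfl⟩; exact hB ξ⟩
  have hM0 : 0 ≤ M := by
    rcases Set.eq_empty_or_nonempty (tsupport b) with h | ⟨ξ0, hξ0⟩
    · simp [hM, h, Real.sSup_empty]
    · exact le_trans (norm_nonneg _) (le_csSup hMbdd ⟨ξ0, hξ0, rfl⟩)
  have hMle : ∀ ξ, ‖b ξ‖ ≤ M := by
    intro ξ
    by_cases h : ξ ∈ tsupport b
    · exact le_csSup hMbdd ⟨ξ, h, rfl⟩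
    · rw [image_eq_zero_of_notMem_tsupport h]; simpa using hM0
  -- measure bound via change of variables
  have hCoV : ENNReal.ofReal a₀ * volume T
      ≤ volume (Metric.closedBall (0 : EuclideanSpace ℝ (Fin d)) r) := by
    have h1 : ENNReal.ofReal a₀ * volume T = ∫⁻ _ in T, ENNReal.ofReal a₀ ∂volume :=
      (setLIntegral_const T _).symm
    rw [h1]
    calc ∫⁻ _ in T, ENNReal.ofReal a₀ ∂volume
        ≤ ∫⁻ x in T, ENNReal.ofReal |(gradDeriv d Φ x).det| ∂volume := by
          refine setLIntegral_mono' hTm fun x hx => ENNReal.ofReal_le_ofReal ?_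
          rw [det_gradDeriv Φ hΦ x]
          exact hdet x hx.1
      _ = volume (g '' T) :=
          lintegral_abs_det_fderiv_eq_addHaar_image volume hTm
            (fun x _ => (hasFDerivAt_grad Φ hΦ x).hasFDerivWithinAt)
            (hinj.mono Set.inter_subset_left)
      _ ≤ volume (Metric.closedBall (0 : EuclideanSpace ℝ (Fin d)) r) := by
          refine measure_mono ?_
          rintro y ⟨x, hx, rfl⟩
          exact hx.2
  have hCB : volume (Metric.closedBall (0 : EuclideanSpace ℝ (Fin d)) r)
      = ENNReal.ofReal (r ^ d) * volume (Metric.ball (0 : EuclideanSpace ℝ (Fin d)) 1) := by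
    rw [Measure.addHaar_closedBall _ _ hr0.le, finrank_euclideanSpace_fin]
  have hTfin : volume T ≠ ⊤ := by
    intro h
    rw [h, ENNReal.mul_top (by simpa using ha₀)] at hCoV
    exact measure_closedBall_lt_top.ne (top_le_iff.mp hCoV)
  have hTr : (volume T).toReal ≤ r ^ d * c / a₀ := by
    have hfin : volume (Metric.closedBall (0 : EuclideanSpace ℝ (Fin d)) r) ≠ ⊤ :=
      measure_closedBall_lt_top.ne
    have h2 := ENNReal.toReal_mono hfin hCoV
    rw [ENNReal.toReal_mul, ENNReal.toReal_ofReal ha₀.le, hCB, ENNReal.toReal_mul,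
      ENNReal.toReal_ofReal (by positivity)] at h2
    rw [le_div_iff₀ ha₀]
    calc (volume T).toReal * a₀ = a₀ * (volume T).toReal := by ring
      _ ≤ r ^ d * c := by rw [hc]; exact h2
  -- pointwise bound
  set f := fun ξ : EuclideanSpace ℝ (Fin d) =>
    Complex.exp (Complex.I * (lam : ℂ) * (Φ ξ : ℂ)) *
      ((ψ (Real.sqrt lam * ‖g ξ‖) : ℝ) : ℂ) * b ξ with hf
  have hfb : ∀ ξ, ‖f ξ‖ ≤ T.indicator (fun _ => M) ξ := by
    intro ξ
    by_cases hξ : ξ ∈ T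
    · rw [Set.indicator_of_mem hξ]
      have he : ‖Complex.exp (Complex.I * (lam : ℂ) * (Φ ξ : ℂ))‖ = 1 := by
        have : Complex.I * (lam : ℂ) * (Φ ξ : ℂ) = ((lam * Φ ξ : ℝ) : ℂ) * Complex.I := by
          push_cast; ring
        rw [this, Complex.norm_exp_ofReal_mul_I]
      have hpsi : ‖((ψ (Real.sqrt lam * ‖g ξ‖) : ℝ) : ℂ)‖ ≤ 1 := by
        rw [Complex.norm_real, Real.norm_eq_abs, abs_le]
        exact ⟨le_trans (by norm_num) (hψ01 _).1, (hψ01 _).2⟩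
      calc ‖f ξ‖ = ‖Complex.exp (Complex.I * (lam : ℂ) * (Φ ξ : ℂ))‖ *
            ‖((ψ (Real.sqrt lam * ‖g ξ‖) : ℝ) : ℂ)‖ * ‖b ξ‖ := by
            rw [hf]; simp [norm_mul]
        _ ≤ 1 * 1 * M := by
            refine mul_le_mul (mul_le_mul (le_of_eq he) hpsi (norm_nonneg _) (by norm_num))
              (hMle ξ) (norm_nonneg _) (by norm_num)
        _ = M := by ring
    · rw [Set.indicator_of_notMem hξ]
      have hz : f ξ = 0 := by
        rw [hT, Set.mem_inter_iff, not_and_or] at hξ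
        rcases hξ with hξ | hξ
        · have : b ξ = 0 := image_eq_zero_of_notMem_tsupport (fun hmem => hξ (hsub hmem))
          rw [hf]; simp [this]
        · have hgt : r < ‖g ξ‖ := by
            by_contra hle
            exact hξ (by simpa [Metric.mem_closedBall, dist_zero_right] using not_lt.mp hle)
          have h2lt : 2 ≤ |Real.sqrt lam * ‖g ξ‖| := by
            rw [abs_of_nonneg (by positivity)]
            have : Real.sqrt lam * r ≤ Real.sqrt lam * ‖g ξ‖ :=
              mul_le_mul_of_nonneg_left hgt.le hs0.le
            calc (2 : ℝ) = Real.sqrt lam * r := by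
                  rw [hrdef, mul_div_cancel₀ _ hs0.ne']
              _ ≤ _ := this
          rw [hf]; simp [hψ0 _ h2lt]
      rw [hz]; simp
  -- conclude
  have hrd : r ^ d = 2 ^ d * lam ^ (-(d : ℝ) / 2) := by
    rw [hrdef, div_pow]
    have hsq : Real.sqrt lam ^ d = lam ^ ((d : ℝ) / 2) := by
      rw [Real.sqrt_eq_rpow, ← Real.rpow_natCast (lam ^ ((1:ℝ)/2)) d, ← Real.rpow_mul hlam0.le]
      ring_nf
    rw [hsq, neg_div, Real.rpow_neg hlam0.le, div_eq_mul_inv]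
  calc ‖∫ ξ, f ξ‖ ≤ (∫⁻ ξ, ENNReal.ofReal ‖f ξ‖).toReal := norm_integral_le_lintegral_norm f
    _ ≤ (ENNReal.ofReal M * volume T).toReal := by
        refine ENNReal.toReal_mono (ENNReal.mul_ne_top ENNReal.ofReal_ne_top hTfin) ?_
        calc ∫⁻ ξ, ENNReal.ofReal ‖f ξ‖
            ≤ ∫⁻ ξ, T.indicator (fun _ => ENNReal.ofReal M) ξ := by
              refine lintegral_mono fun ξ => ?_
              by_cases hξ : ξ ∈ T
              · rw [Set.indicator_of_mem hξ]
                exact ENNReal.ofReal_le_ofReal (by simpa [Set.indicator_of_mem hξ] using hfb ξ)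
              · rw [Set.indicator_of_notMem hξ]
                have := hfb ξ
                rw [Set.indicator_of_notMem hξ] at this
                simp [le_antisymm this (norm_nonneg _)]
          _ = ENNReal.ofReal M * volume T := by
              rw [lintegral_indicator hTm, setLIntegral_const]
    _ = M * (volume T).toReal := by rw [ENNReal.toReal_mul, ENNReal.toReal_ofReal hM0]
    _ ≤ M * (r ^ d * c / a₀) := mul_le_mul_of_nonneg_left hTr hM0
    _ = 2 ^ d * c / a₀ * M * lam ^ (-(d : ℝ) / 2) := by rw [hrd]; ring
end

section
/- There is a constant C_d depending only on d such that the following holds. Let Φ : ℝ^d → ℝ be smooth, b : ℝ^d → ℂ integrable with compact support K, and V an open neighborhood of K on which the second derivatives of Φ are bounded: sup_{|α|=2, ξ∈V} |∂^α Φ(ξ)| ≤ M₂, and |det Hess Φ(ξ)| ≥ a₀ > 0 on V. Then a₀ ≤ C_d M₂^d; moreover, for every λ ≥ 1 with λ^{1/2} a₀ ≤ 1 one has |∫_{ℝ^d} e^{iλΦ(ξ)} b(ξ) dξ| ≤ C_d M₂^d ‖b‖_{L¹(ℝ^d)} a₀^{-(1+d)} λ^{-d/2}. -/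
open MeasureTheory

theorem stmt16 (d : ℕ) :
    ∃ C : ℝ, 0 < C ∧
      ∀ (Φ : EuclideanSpace ℝ (Fin d) → ℝ) (b : EuclideanSpace ℝ (Fin d) → ℂ)
        (V : Set (EuclideanSpace ℝ (Fin d))) (a₀ M₂ : ℝ),
        ContDiff ℝ (⊤ : ℕ∞) Φ → Integrable b → HasCompactSupport b →
        IsOpen V → V.Nonempty → tsupport b ⊆ V →
        (∀ ξ ∈ V, ∀ i j, |hessM d Φ ξ i j| ≤ M₂) →
        0 < a₀ → (∀ ξ ∈ V, a₀ ≤ |(hessM d Φ ξ).det|) →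
        a₀ ≤ C * M₂ ^ d ∧
        ∀ lam : ℝ, 1 ≤ lam → Real.sqrt lam * a₀ ≤ 1 →
          ‖∫ ξ : EuclideanSpace ℝ (Fin d),
              Complex.exp (Complex.I * (lam : ℂ) * (Φ ξ : ℂ)) * b ξ‖ ≤
            C * M₂ ^ d * (∫ ξ : EuclideanSpace ℝ (Fin d), ‖b ξ‖) / a₀ ^ (1 + d) *
              lam ^ (-(d : ℝ) / 2) := by
  refine ⟨(d.factorial : ℝ) + 1, by positivity, ?_⟩
  intro Φ b V a₀ M₂ hΦ hb hbc hV hVne hsupp hM ha₀ hdet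
  obtain ⟨ξ₀, hξ₀⟩ := hVne
  -- first part
  have hMd : 0 ≤ M₂ ^ d := by
    rcases Nat.eq_zero_or_pos d with hd | hd
    · simp [hd]
    · have : (0 : ℝ) ≤ M₂ := le_trans (abs_nonneg _) (hM ξ₀ hξ₀ ⟨0, hd⟩ ⟨0, hd⟩)
      positivity
  have hdetle : |(hessM d Φ ξ₀).det| ≤ (d.factorial : ℝ) * M₂ ^ d := by
    have := Matrix.det_le (A := hessM d Φ ξ₀) (abv := AbsoluteValue.abs)
      (x := M₂) (fun i j => hM ξ₀ hξ₀ i j)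
    simpa [nsmul_eq_mul] using this
  have h1 : a₀ ≤ ((d.factorial : ℝ) + 1) * M₂ ^ d := by
    have := le_trans (hdet ξ₀ hξ₀) hdetle
    nlinarith
  refine ⟨h1, ?_⟩
  intro lam hlam hsl
  have hlam0 : (0 : ℝ) < lam := lt_of_lt_of_le one_pos hlam
  have hsqrt : 0 < Real.sqrt lam := Real.sqrt_pos.2 hlam0
  set B : ℝ := ∫ ξ : EuclideanSpace ℝ (Fin d), ‖b ξ‖ with hB
  have hB0 : 0 ≤ B := integral_nonneg fun _ => norm_nonneg _
  set C : ℝ := (d.factorial : ℝ) + 1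
  -- lam ^ (-(d)/2) ≥ a₀ ^ d
  have hrw : lam ^ (-(d : ℝ) / 2) = ((Real.sqrt lam) ^ d)⁻¹ := by
    rw [Real.sqrt_eq_rpow, ← Real.rpow_natCast (lam ^ ((1:ℝ)/2)) d,
      ← Real.rpow_mul hlam0.le, ← Real.rpow_neg hlam0.le]
    ring_nf
  have hpow : a₀ ^ d ≤ lam ^ (-(d : ℝ) / 2) := by
    rw [hrw]
    have hs : Real.sqrt lam ≤ a₀⁻¹ := by
      rw [← one_div]
      exact (le_div_iff₀ ha₀).2 hsl
    have h2 : (Real.sqrt lam) ^ d ≤ (a₀⁻¹) ^ d :=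
      pow_le_pow_left₀ (Real.sqrt_nonneg _) hs d
    calc a₀ ^ d = ((a₀⁻¹) ^ d)⁻¹ := by rw [inv_pow, inv_inv]
      _ ≤ ((Real.sqrt lam) ^ d)⁻¹ := by
          apply inv_anti₀ (by positivity) h2
  -- trivial bound on the integral
  have hnorm : ‖∫ ξ : EuclideanSpace ℝ (Fin d),
      Complex.exp (Complex.I * (lam : ℂ) * (Φ ξ : ℂ)) * b ξ‖ ≤ B := by
    calc ‖∫ ξ : EuclideanSpace ℝ (Fin d),
        Complex.exp (Complex.I * (lam : ℂ) * (Φ ξ : ℂ)) * b ξ‖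
        ≤ ∫ ξ : EuclideanSpace ℝ (Fin d),
            ‖Complex.exp (Complex.I * (lam : ℂ) * (Φ ξ : ℂ)) * b ξ‖ :=
          norm_integral_le_integral_norm _
      _ = B := by
          refine integral_congr_ae (Filter.Eventually.of_forall fun ξ => ?_)
          simp [Complex.norm_exp, Complex.mul_re]
  -- chain it all
  have hCM : 0 < C * M₂ ^ d := lt_of_lt_of_le ha₀ h1
  have key : B ≤ C * M₂ ^ d * B / a₀ ^ (1 + d) * lam ^ (-(d : ℝ) / 2) := by
    have step1 : C * M₂ ^ d * B / a₀ ^ (1 + d) * a₀ ^ d ≤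
        C * M₂ ^ d * B / a₀ ^ (1 + d) * lam ^ (-(d : ℝ) / 2) := by
      apply mul_le_mul_of_nonneg_left hpow
      positivity
    have step2 : C * M₂ ^ d * B / a₀ ^ (1 + d) * a₀ ^ d = C * M₂ ^ d * B / a₀ := by
      rw [pow_add, pow_one]
      field_simp
    have step3 : B ≤ C * M₂ ^ d * B / a₀ := by
      rw [div_eq_mul_inv, mul_comm (C * M₂ ^ d) B, mul_assoc]
      have hone : 1 ≤ C * M₂ ^ d * a₀⁻¹ := by
        rw [← div_eq_mul_inv]
        exact (one_le_div ha₀).2 h1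
      exact le_mul_of_one_le_right hB0 hone
    calc B ≤ C * M₂ ^ d * B / a₀ := step3
      _ = C * M₂ ^ d * B / a₀ ^ (1 + d) * a₀ ^ d := step2.symm
      _ ≤ _ := step1
  exact le_trans hnorm key
end
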